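/- Let (X, 𝒪_X) be a ringed space and p ∈ X. If C is a cotorsion 𝒪_{X,p}-module, then the skyscraper sheaf S_p(C) is a cotorsion 𝒪_X-module, i.e., Ext¹(F, S_p(C)) = 0 for every flat 𝒪_X-module F. -/

import Mathlib

open CategoryTheory Limits Abelian TopologicalSpace

universe w w' u

set_option linter.unnecessarySimpa false
set_option linter.unusedVariables false

namespace Stmt17Aux


variable {A B : Type*} [Category A] [Category B] [Abelian A] [Abelian B]
  (L : A ⥤ B) (R : B ⥤ A) (adj : L ⊣ R) [L.Additive] [R.Additive]

/-- Complex-level adjunction. -/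
noncomputable def mapCCAdj :
    L.mapHomologicalComplex (ComplexShape.up ℤ) ⊣ R.mapHomologicalComplex (ComplexShape.up ℤ) :=
  Adjunction.mkOfUnitCounit
    { unit :=
        { app := fun K =>
            { f := fun i => adj.unit.app (K.X i)
              comm' := fun i j _ => by exact (adj.unit.naturality (K.d i j)).symm }
          naturality := fun K K' f => by
            ext i
            exact adj.unit.naturality (f.f i) }
      counit :=
        { app := fun K =>
            { f := fun i => adj.counit.app (K.X i)
              comm' := fun i j _ => by exact (adj.counit.naturality (K.d i j)).symm }
          naturality := fun K K' f => by
            ext i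
            exact adj.counit.naturality (f.f i) }
      left_triangle := by
        ext K i
        simp
        exact adj.left_triangle_components (K.X i)
      right_triangle := by
        ext K i
        simp
        exact adj.right_triangle_components (K.X i) }

section Derived

variable [PreservesFiniteLimits L] [PreservesFiniteColimits L]
  [PreservesFiniteLimits R] [PreservesFiniteColimits R]
  [HasDerivedCategory A] [HasDerivedCategory B]

noncomputable instance : CatCommSq (L.mapHomologicalComplex (ComplexShape.up ℤ))
    DerivedCategory.Q DerivedCategory.Q L.mapDerivedCategory :=
  ⟨L.mapDerivedCategoryFactors.symm⟩

noncomputable instance : CatCommSq (R.mapHomologicalComplex (ComplexShape.up ℤ))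
    DerivedCategory.Q DerivedCategory.Q R.mapDerivedCategory :=
  ⟨R.mapDerivedCategoryFactors.symm⟩

/-- Derived adjunction. -/
noncomputable def derivedAdj : L.mapDerivedCategory ⊣ R.mapDerivedCategory :=
  (mapCCAdj L R adj).localization DerivedCategory.Q
    (HomologicalComplex.quasiIso A (ComplexShape.up ℤ)) DerivedCategory.Q
    (HomologicalComplex.quasiIso B (ComplexShape.up ℤ))
    L.mapDerivedCategory R.mapDerivedCategory

/-- object-level iso from `singleFunctorsPostcompQIso`. -/
noncomputable def singleObjQIso (C : Type*) [Category C] [Abelian C] [HasDerivedCategory C] (X : C) :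
    (DerivedCategory.singleFunctor C 0).obj X ≅
      DerivedCategory.Q.obj ((CochainComplex.singleFunctor C 0).obj X) where
  hom := ((DerivedCategory.singleFunctorsPostcompQIso C).hom.hom 0).app X
  inv := ((DerivedCategory.singleFunctorsPostcompQIso C).inv.hom 0).app X
  hom_inv_id := SingleFunctors.hom_inv_id_hom_app _ 0 X
  inv_hom_id := SingleFunctors.inv_hom_id_hom_app _ 0 X

/-- Compatibility of `mapDerivedCategory` with single functors, object level. -/
noncomputable def singleCompat (X : A) :
    L.mapDerivedCategory.obj ((DerivedCategory.singleFunctor A 0).obj X) ≅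
      (DerivedCategory.singleFunctor B 0).obj (L.obj X) :=
  (L.mapDerivedCategory.mapIso (singleObjQIso A X)) ≪≫
    L.mapDerivedCategoryFactors.app _ ≪≫
    DerivedCategory.Q.mapIso ((HomologicalComplex.singleMapHomologicalComplex L (ComplexShape.up ℤ) 0).app X) ≪≫
    (singleObjQIso B (L.obj X)).symm

end Derived

section ExtEquiv

variable [PreservesFiniteLimits L] [PreservesFiniteColimits L]
  [PreservesFiniteLimits R] [PreservesFiniteColimits R]

/-- Adjunction isomorphism on Ext groups. -/
noncomputable def extEquiv [HasExt.{w} A] [HasExt.{w'} B] (X : A) (Y : B) (n : ℕ) :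
    Ext.{w} X (R.obj Y) n ≃ Ext.{w'} (L.obj X) Y n := by
  letI := HasDerivedCategory.standard A
  letI := HasDerivedCategory.standard B
  refine Ext.homEquiv.trans (Equiv.trans ?_ Ext.homEquiv.symm)
  refine (Equiv.trans ?_ ((derivedAdj L R adj).homEquiv _ _).symm).trans
    (Iso.homCongr (singleCompat L X) (Iso.refl _))
  exact Iso.homCongr (Iso.refl _)
    ((((shiftFunctor _ (n : ℤ)).mapIso (singleCompat R Y)).symm) ≪≫
      ((R.mapDerivedCategory.commShiftIso (n : ℤ)).app _).symm)

end ExtEquiv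

end Stmt17Aux

instance instCategorySheafOfModulesTop (X : TopCat.{u}) (R' : TopCat.Sheaf RingCat.{u} X) :
    Category.{u} (SheafOfModules.{u} R') :=
  SheafOfModules.instCategory

noncomputable instance instAbelianSheafOfModulesTop (X : TopCat.{u})
    (R' : TopCat.Sheaf RingCat.{u} X) : Abelian (SheafOfModules.{u} R') :=
  SheafOfModules.instAbelian (R := R')

/-- Let `(X, 𝒪_X)` be a ringed space and `p ∈ X`.  Write `𝒪_X-Mod` for
the category of sheaves of `𝒪_X`-modules, with exact stalk functors
`(−)_q : 𝒪_X-Mod ⥤ 𝒪_{X,q}-Mod` for each `q ∈ X`, and let the skyscraper functor `S_p` at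
`p` be the right adjoint of `(−)_p`; `S_p` is exact.  An `𝒪_X`-module `F` is flat iff all
its stalks are flat.  If `C` is a cotorsion `𝒪_{X,p}`-module (i.e. `Ext¹(G, C) = 0` for
every flat `𝒪_{X,p}`-module `G`), then `S_p(C)` is a cotorsion `𝒪_X`-module:
`Ext¹(F, S_p(C)) = 0` for every flat `𝒪_X`-module `F`. -/
theorem stmt17 (X : TopCat.{u}) (p : X) (R : TopCat.Sheaf CommRingCat.{u} X)
    (R' : TopCat.Sheaf RingCat.{u} X)
    (hR' : R' = (sheafCompose _ (forget₂ CommRingCat.{u} RingCat.{u})).obj R)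
    [HasExt.{w} (SheafOfModules.{u} R')]
    [HasExt.{w'} (ModuleCat.{u} (R.presheaf.stalk p))]
    (stalkAt : ∀ q : X, SheafOfModules.{u} R' ⥤ ModuleCat.{u} (R.presheaf.stalk q))
    (skyscraper : ModuleCat.{u} (R.presheaf.stalk p) ⥤ SheafOfModules.{u} R')
    (adj : stalkAt p ⊣ skyscraper)
    [∀ q, PreservesFiniteLimits (stalkAt q)] [∀ q, PreservesFiniteColimits (stalkAt q)]
    [PreservesFiniteLimits skyscraper] [PreservesFiniteColimits skyscraper]
    (C : ModuleCat.{u} (R.presheaf.stalk p))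
    (hC : ∀ G : ModuleCat.{u} (R.presheaf.stalk p),
      Module.Flat (R.presheaf.stalk p) G → Subsingleton (Ext.{w'} G C 1)) :
    ∀ F : SheafOfModules.{u} R',
      (∀ q : X, Module.Flat (R.presheaf.stalk q) ((stalkAt q).obj F)) →
        Subsingleton (Ext.{w} F (skyscraper.obj C) 1) := by
  intro F hF
  haveI : (stalkAt p).Additive := Functor.additive_of_preserves_binary_products _
  haveI : skyscraper.Additive := Functor.additive_of_preserves_binary_products _
  haveI := hC _ (hF p)
  exact (Stmt17Aux.extEquiv (stalkAt p) skyscraper adj F C 1).subsingleton
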